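/- Let G be a bipartite graph with unit edge lengths and C ⊆ E(G) a set of edges. Then C is a (1,1)-contraction if and only if every two-element subset of C is a (1,1)-contraction. -/

import Mathlib

open Classical

noncomputable def walkLen {V : Type*} (G : SimpleGraph V) (ℓ : Sym2 V → ℝ)
    {u v : V} (w : G.Walk u v) : ℝ := (w.edges.map ℓ).sum

noncomputable def gdist {V : Type*} (G : SimpleGraph V) (ℓ : Sym2 V → ℝ) (u v : V) : ℝ :=
  sInf {x : ℝ | ∃ w : G.Walk u v, walkLen G ℓ w = x}

noncomputable def zeroOn {V : Type*} (ℓ : Sym2 V → ℝ) (C : Set (Sym2 V)) : Sym2 V → ℝ :=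
  fun e => if e ∈ C then 0 else ℓ e

section Aux

variable {V : Type*} (G : SimpleGraph V)

/-- number of edges of a walk (with multiplicity) not in `C` -/
noncomputable def nonC (C : Set (Sym2 V)) {u v : V} (w : G.Walk u v) : ℕ :=
  w.edges.countP (fun e => decide (e ∉ C))

variable {G}

lemma walkLen_zeroOn (C : Set (Sym2 V)) {u v : V} (w : G.Walk u v) :
    walkLen G (zeroOn (fun _ => (1 : ℝ)) C) w = (nonC G C w : ℝ) := by
  unfold walkLen nonC
  induction w.edges with
  | nil => simp
  | cons e l ih =>
      simp only [List.map_cons, List.sum_cons, List.countP_cons, ih, zeroOn]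
      by_cases h : e ∈ C <;> simp [h] <;> push_cast <;> ring

lemma walkLen_one {u v : V} (w : G.Walk u v) :
    walkLen G (fun _ => (1 : ℝ)) w = (w.length : ℝ) := by
  unfold walkLen
  rw [← SimpleGraph.Walk.length_edges]
  induction w.edges with
  | nil => simp
  | cons e l ih => simp [ih]; push_cast; ring

lemma nonC_le_length (C : Set (Sym2 V)) {u v : V} (w : G.Walk u v) :
    nonC G C w ≤ w.length := by
  rw [← SimpleGraph.Walk.length_edges]
  exact List.countP_le_length

lemma nonC_append (C : Set (Sym2 V)) {u v x : V} (p : G.Walk u v) (q : G.Walk v x) :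
    nonC G C (p.append q) = nonC G C p + nonC G C q := by
  unfold nonC
  rw [SimpleGraph.Walk.edges_append, List.countP_append]

lemma nonC_cons (C : Set (Sym2 V)) {u v x : V} (h : G.Adj u v) (q : G.Walk v x) :
    nonC G C (SimpleGraph.Walk.cons h q)
      = (if s(u, v) ∈ C then 0 else 1) + nonC G C q := by
  unfold nonC
  rw [SimpleGraph.Walk.edges_cons, List.countP_cons]
  by_cases hm : s(u, v) ∈ C <;> simp [hm] <;> omega

lemma nonC_eq_length_of_free (C : Set (Sym2 V)) {u v : V} (w : G.Walk u v)
    (h : ∀ e ∈ w.edges, e ∉ C) : nonC G C w = w.length := by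
  rw [← SimpleGraph.Walk.length_edges]
  unfold nonC
  rw [List.countP_eq_length]
  intro e he
  simpa using h e he

lemma walkLen_nonneg {ℓ : Sym2 V → ℝ} (hℓ : ∀ e, 0 ≤ ℓ e) {u v : V} (w : G.Walk u v) :
    0 ≤ walkLen G ℓ w := by
  unfold walkLen
  apply List.sum_nonneg
  intro x hx
  obtain ⟨e, -, rfl⟩ := List.mem_map.mp hx
  exact hℓ e

lemma zeroOn_nonneg (C : Set (Sym2 V)) (e : Sym2 V) :
    0 ≤ zeroOn (fun _ => (1 : ℝ)) C e := by
  unfold zeroOn; by_cases h : e ∈ C <;> simp [h]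

lemma gdist_bddBelow {ℓ : Sym2 V → ℝ} (hℓ : ∀ e, 0 ≤ ℓ e) (u v : V) :
    BddBelow {x : ℝ | ∃ w : G.Walk u v, walkLen G ℓ w = x} := by
  refine ⟨0, fun x hx => ?_⟩
  obtain ⟨w, rfl⟩ := hx
  exact walkLen_nonneg hℓ w

lemma gdist_le_walkLen {ℓ : Sym2 V → ℝ} (hℓ : ∀ e, 0 ≤ ℓ e) {u v : V} (w : G.Walk u v) :
    gdist G ℓ u v ≤ walkLen G ℓ w :=
  csInf_le (gdist_bddBelow hℓ u v) ⟨w, rfl⟩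

lemma gdist_one_le_dist (hconn : G.Connected) (u v : V) :
    gdist G (fun _ => (1 : ℝ)) u v ≤ (G.dist u v : ℝ) := by
  obtain ⟨p, hp⟩ := hconn.exists_walk_length_eq_dist u v
  calc gdist G (fun _ => (1 : ℝ)) u v ≤ walkLen G (fun _ => (1 : ℝ)) p :=
        gdist_le_walkLen (fun _ => zero_le_one) p
    _ = (G.dist u v : ℝ) := by rw [walkLen_one, hp]

lemma dist_le_gdist_one (hconn : G.Connected) (u v : V) :
    (G.dist u v : ℝ) ≤ gdist G (fun _ => (1 : ℝ)) u v := by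
  have hne : {x : ℝ | ∃ w : G.Walk u v, walkLen G (fun _ => (1 : ℝ)) w = x}.Nonempty :=
    ⟨_, (hconn u v).some, rfl⟩
  apply le_csInf hne
  rintro x ⟨w, rfl⟩
  rw [walkLen_one]
  exact_mod_cast SimpleGraph.dist_le w

/-- parity of walks in a 2-colorable graph -/
lemma walk_parity (χ : G.Coloring (Fin 2)) {u v : V} (w : G.Walk u v) :
    (χ u = χ v ↔ Even w.length) := by
  induction w with
  | nil => simp
  | @cons a b c h w ih =>
      have hne : χ a ≠ χ b := χ.valid h
      simp only [SimpleGraph.Walk.length_cons, Nat.even_add_one, ← ih]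
      have h1 : (χ a).val < 2 := (χ a).isLt
      have h2 : (χ b).val < 2 := (χ b).isLt
      have h3 : (χ c).val < 2 := (χ c).isLt
      have key : ∀ a b c : Fin 2, a ≠ b → (a = c ↔ ¬ b = c) := by decide
      exact key _ _ _ hne

lemma dist_parity (hconn : G.Connected) (χ : G.Coloring (Fin 2)) (u v : V) :
    (χ u = χ v ↔ Even (G.dist u v)) := by
  obtain ⟨p, hp⟩ := hconn.exists_walk_length_eq_dist u v
  rw [← hp]
  exact walk_parity χ p

/-- first C-edge decomposition -/
lemma exists_first_C_edge (C : Set (Sym2 V)) {u v : V} (w : G.Walk u v)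
    (hw : ∃ e ∈ w.edges, e ∈ C) :
    ∃ (x y : V) (p : G.Walk u x) (h : G.Adj x y) (t : G.Walk y v),
      w = p.append (SimpleGraph.Walk.cons h t) ∧ (∀ e ∈ p.edges, e ∉ C) ∧ s(x, y) ∈ C := by
  induction w with
  | nil => simp at hw
  | @cons a b c h w ih =>
      by_cases hm : s(a, b) ∈ C
      · exact ⟨a, b, SimpleGraph.Walk.nil, h, w, by simp, by simp, hm⟩
      · have hw' : ∃ e ∈ w.edges, e ∈ C := by
          obtain ⟨e, he, heC⟩ := hw
          rw [SimpleGraph.Walk.edges_cons] at he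
          rcases List.mem_cons.mp he with rfl | he'
          · exact absurd heC hm
          · exact ⟨e, he', heC⟩
        obtain ⟨x, y, p, h', t, hdecomp, hfree, hxy⟩ := ih hw'
        refine ⟨x, y, SimpleGraph.Walk.cons h p, h', t, ?_, ?_, hxy⟩
        · rw [SimpleGraph.Walk.cons_append, hdecomp]
        · intro e he
          rw [SimpleGraph.Walk.edges_cons] at he
          rcases List.mem_cons.mp he with rfl | he'
          · exact hm
          · exact hfree e he'

lemma exists_C_edge_of_nonC_lt (C : Set (Sym2 V)) {u v : V} (w : G.Walk u v)
    (h : nonC G C w < w.length) : ∃ e ∈ w.edges, e ∈ C := by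
  by_contra hcon
  push_neg at hcon
  rw [nonC_eq_length_of_free C w hcon] at h
  omega

/-- The core combinatorial lemma. -/
lemma core_lemma {G : SimpleGraph V} (hconn : G.Connected) (hbip : G.Colorable 2)
    (C : Set (Sym2 V))
    (H : ∀ e ∈ C, ∀ f ∈ C, e ≠ f →
      ∀ u v : V, gdist G (fun _ => (1 : ℝ)) u v - 1 ≤
        gdist G (zeroOn (fun _ => (1 : ℝ)) ({e, f} : Set (Sym2 V))) u v) :
    ∀ (n : ℕ) (u v : V) (w : G.Walk u v), w.length = n →
      G.dist u v ≤ nonC G C w + 1 := by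
  obtain ⟨χ⟩ := hbip
  intro n
  induction n using Nat.strong_induction_on with
  | _ n ih =>
  intro u v w hlen
  by_cases htriv : w.length ≤ nonC G C w + 1
  · exact le_trans (SimpleGraph.dist_le w) (by omega)
  push_neg at htriv
  -- there is a C-edge
  obtain ⟨x, y, p, hxy, t, hdec, hpfree, heC⟩ :=
    exists_first_C_edge C w (exists_C_edge_of_nonC_lt C w (by omega))
  -- counts
  have hw_nonC : nonC G C w = p.length + nonC G C t := by
    rw [hdec, nonC_append, nonC_cons, nonC_eq_length_of_free C p hpfree, if_pos heC]; omega
  have hw_len : w.length = p.length + 1 + t.length := by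
    rw [hdec]; simp [SimpleGraph.Walk.length_append]; omega
  -- t must contain a C-edge, else contradiction with htriv
  have ht : ∃ e ∈ t.edges, e ∈ C := by
    apply exists_C_edge_of_nonC_lt
    have := nonC_le_length C t
    by_contra hcon
    push_neg at hcon
    have : nonC G C t = t.length := le_antisymm (nonC_le_length C t) hcon
    omega
  obtain ⟨c, d, q, hcd, r, hdec2, hqfree, hfC⟩ := exists_first_C_edge C t ht
  have ht_nonC : nonC G C t = q.length + nonC G C r := by
    rw [hdec2, nonC_append, nonC_cons, nonC_eq_length_of_free C q hqfree, if_pos hfC]; omega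
  have ht_len : t.length = q.length + 1 + r.length := by
    rw [hdec2]; simp [SimpleGraph.Walk.length_append]; omega
  -- key claim: dist u d ≤ p.length + q.length
  have hq_dist : G.dist y c ≤ q.length := SimpleGraph.dist_le q
  have hp_dist : G.dist u x ≤ p.length := SimpleGraph.dist_le p
  have hkey : G.dist u d ≤ p.length + q.length := by
    by_cases hef : s(x, y) = s(c, d)
    · -- same edge twice
      rcases Sym2.eq_iff.mp hef with ⟨rfl, rfl⟩ | ⟨rfl, rfl⟩
      · -- x = c, y = d : q is a walk y → x with y ≠ x, so q.length ≥ 1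
        have hq1 : 1 ≤ q.length := by
          have := hconn.pos_dist_of_ne (G.ne_of_adj hxy).symm
          omega
        have : G.dist u y ≤ G.dist u x + G.dist x y :=
          hconn.dist_triangle
        have hxy1 : G.dist x y ≤ 1 := by
          have := SimpleGraph.dist_le (SimpleGraph.Walk.cons hxy SimpleGraph.Walk.nil)
          simpa using this
        omega
      · -- x = d, y = c
        omega
    · -- distinct edges: use the pair hypothesis plus parity
      have hpair := H _ heC _ hfC hef x d
      -- the walk x → y → ... → c → d with e, f free
      obtain ⟨sp, hsp⟩ := hconn.exists_walk_length_eq_dist y c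
      set ℓ2 := zeroOn (fun _ => (1 : ℝ)) ({s(x,y), s(c,d)} : Set (Sym2 V)) with hℓ2
      have hl2nonneg : ∀ e, 0 ≤ ℓ2 e := zeroOn_nonneg _
      set wxd : G.Walk x d :=
        SimpleGraph.Walk.cons hxy (sp.append (SimpleGraph.Walk.cons hcd SimpleGraph.Walk.nil))
        with hwxd
      have hle : walkLen G ℓ2 wxd ≤ (G.dist y c : ℝ) := by
        have hedges : wxd.edges
            = s(x, y) :: (sp.edges ++ [s(c, d)]) := by
          rw [hwxd]
          simp [SimpleGraph.Walk.edges_cons, SimpleGraph.Walk.edges_append]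
        unfold walkLen
        rw [hedges]
        simp only [List.map_cons, List.sum_cons, List.map_append, List.sum_append]
        have h1 : ℓ2 s(x, y) = 0 := by simp [hℓ2, zeroOn]
        have h2 : ℓ2 s(c, d) = 0 := by simp [hℓ2, zeroOn]
        rw [h1, h2]
        have : ((sp.edges.map ℓ2).sum : ℝ) ≤ (sp.length : ℝ) := by
          calc (sp.edges.map ℓ2).sum = walkLen G ℓ2 sp := rfl
            _ ≤ (sp.length : ℝ) := by
                rw [walkLen_zeroOn]
                exact_mod_cast nonC_le_length _ sp
        rw [← hsp]
        push_cast
        simpa using this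
      have h3 : (G.dist x d : ℝ) - 1 ≤ (G.dist y c : ℝ) := by
        calc (G.dist x d : ℝ) - 1 ≤ gdist G (fun _ => (1 : ℝ)) x d - 1 := by
              have := dist_le_gdist_one hconn x d
              linarith
          _ ≤ gdist G ℓ2 x d := hpair
          _ ≤ walkLen G ℓ2 wxd := gdist_le_walkLen hl2nonneg wxd
          _ ≤ (G.dist y c : ℝ) := hle
      have h4 : G.dist x d ≤ G.dist y c + 1 := by
        have : (G.dist x d : ℝ) ≤ (G.dist y c : ℝ) + 1 := by linarith
        exact_mod_cast this
      -- parity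
      have par1 := dist_parity hconn χ x d
      have par2 := dist_parity hconn χ y c
      have hxyne : χ x ≠ χ y := χ.valid hxy
      have hcdne : χ c ≠ χ d := χ.valid hcd
      have hsame : Even (G.dist x d) ↔ Even (G.dist y c) := by
        rw [← par1, ← par2]
        rw [Fin.ext_iff, Fin.ext_iff] at *
        have h1 : (χ x).val < 2 := (χ x).isLt
        have h2 : (χ y).val < 2 := (χ y).isLt
        have h3 : (χ c).val < 2 := (χ c).isLt
        have h4 : (χ d).val < 2 := (χ d).isLt
        omega
      have h5 : G.dist x d ≤ G.dist y c := by
        rw [Nat.even_iff, Nat.even_iff] at hsame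
        omega
      have h6 : G.dist u d ≤ G.dist u x + G.dist x d := hconn.dist_triangle
      omega
  -- surgery: new walk = shortest path (u → d) ++ r
  obtain ⟨sp, hsp⟩ := hconn.exists_walk_length_eq_dist u d
  set w' : G.Walk u v := sp.append r with hw'
  have hw'_len : w'.length < n := by
    rw [hw']
    rw [SimpleGraph.Walk.length_append, hsp]
    omega
  have hw'_nonC : nonC G C w' ≤ nonC G C w := by
    rw [hw', nonC_append]
    have h1 : nonC G C sp ≤ sp.length := nonC_le_length C sp
    omega
  have := ih w'.length hw'_len u v w' rfl
  omega

end Aux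

theorem bipartite_pairwise_contraction {V : Type*} [Fintype V] (G : SimpleGraph V)
    (hconn : G.Connected) (hbip : G.Colorable 2)
    (C : Set (Sym2 V)) (hC : C ⊆ G.edgeSet) :
    (∀ u v : V, gdist G (fun _ => (1 : ℝ)) u v - 1 ≤
        gdist G (zeroOn (fun _ => (1 : ℝ)) C) u v) ↔
    (∀ e ∈ C, ∀ f ∈ C, e ≠ f →
      ∀ u v : V, gdist G (fun _ => (1 : ℝ)) u v - 1 ≤
        gdist G (zeroOn (fun _ => (1 : ℝ)) ({e, f} : Set (Sym2 V))) u v) := by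
  constructor
  · intro h e heC f hfC hef u v
    refine le_trans (h u v) ?_
    -- gdist with C ≤ gdist with {e,f} since zeroOn C ≤ zeroOn {e,f} pointwise
    have hne : {x : ℝ | ∃ w : G.Walk u v,
        walkLen G (zeroOn (fun _ => (1 : ℝ)) ({e, f} : Set (Sym2 V))) w = x}.Nonempty :=
      ⟨_, (hconn u v).some, rfl⟩
    apply le_csInf hne
    rintro x ⟨w, rfl⟩
    have hmono : walkLen G (zeroOn (fun _ => (1 : ℝ)) C) w
        ≤ walkLen G (zeroOn (fun _ => (1 : ℝ)) ({e, f} : Set (Sym2 V))) w := by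
      unfold walkLen
      apply List.sum_le_sum
      intro i hi
      unfold zeroOn
      by_cases h1 : i ∈ ({e, f} : Set (Sym2 V))
      · have h2 : i ∈ C := by
          rcases h1 with rfl | h1
          · exact heC
          · simp only [Set.mem_singleton_iff] at h1; subst h1; exact hfC
        simp [h1, h2]
      · by_cases h2 : i ∈ C <;> simp [h1, h2]
    exact le_trans (gdist_le_walkLen (zeroOn_nonneg C) w) hmono
  · intro H u v
    have hne : {x : ℝ | ∃ w : G.Walk u v,
        walkLen G (zeroOn (fun _ => (1 : ℝ)) C) w = x}.Nonempty :=
      ⟨_, (hconn u v).some, rfl⟩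
    apply le_csInf hne
    rintro x ⟨w, rfl⟩
    rw [walkLen_zeroOn]
    have hcore := core_lemma hconn hbip C H w.length u v w rfl
    have h1 := gdist_one_le_dist hconn u v
    have h2 : (G.dist u v : ℝ) ≤ (nonC G C w : ℝ) + 1 := by exact_mod_cast hcore
    linarith
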